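/- Let F be a field with no nonzero self-orthogonal vectors in F^d. Let G=(V,E) be a graph, (G,L) an instance assigning to each vertex v a subspace L(v) ⊆ F^d, and let w ∈ V be a vertex such that for every subspace Q ⊆ F^d satisfying Q ∩ L(v) ≠ {0} for all v ≠ w with N_G(v) = N_G(w), it holds that Q ∩ L(w) ≠ {0}. Let (G',L') be obtained by deleting w. Then G admits an orthogonal representation over F^d with u_v ∈ L(v) for all v if and only if G' admits one with u_v ∈ L'(v) for all v ≠ w. -/

import Mathlib

private def dotMap (F : Type*) [Field F] (d : ℕ) (y : Fin d → F) :
    (Fin d → F) →ₗ[F] F where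
  toFun x := ∑ t, x t * y t
  map_add' a b := by simp [add_mul, Finset.sum_add_distrib]
  map_smul' c a := by simp [Finset.mul_sum, mul_assoc]

/-- removing a vertex w whose subspace constraint is implied by those of
its neighborhood-twins preserves solvability of the subspace-choosability instance. -/
theorem stmt_17 (F : Type*) [Field F] (d : ℕ)
    (hF : ∀ x : Fin d → F, ∑ t, x t * x t = 0 → x = 0)
    (V : Type*) [Fintype V] [DecidableEq V] (G : SimpleGraph V)
    (L : V → Submodule F (Fin d → F)) (w : V)
    (hw : ∀ Q : Submodule F (Fin d → F),
      (∀ v, v ≠ w → (∀ x, G.Adj v x ↔ G.Adj w x) → Q ⊓ L v ≠ ⊥) → Q ⊓ L w ≠ ⊥) :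
    (∃ u : V → Fin d → F,
        (∀ v, u v ∈ L v) ∧
        (∀ v, ∑ t, u v t * u v t ≠ 0) ∧
        ∀ v v', G.Adj v v' → ∑ t, u v t * u v' t = 0) ↔
      (∃ u : V → Fin d → F,
        (∀ v, v ≠ w → u v ∈ L v) ∧
        (∀ v, v ≠ w → ∑ t, u v t * u v t ≠ 0) ∧
        ∀ v v', v ≠ w → v' ≠ w → G.Adj v v' → ∑ t, u v t * u v' t = 0) := by
  constructor
  · rintro ⟨u, h1, h2, h3⟩
    exact ⟨u, fun v _ => h1 v, fun v _ => h2 v, fun v v' _ _ h => h3 v v' h⟩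
  · rintro ⟨u, h1, h2, h3⟩
    set Q : Submodule F (Fin d → F) :=
      ⨅ v : {v // G.Adj w v}, LinearMap.ker (dotMap F d (u v.1)) with hQdef
    have hmemQ : ∀ x, x ∈ Q ↔ ∀ v, G.Adj w v → ∑ t, x t * u v t = 0 := by
      intro x
      rw [hQdef, Submodule.mem_iInf]
      constructor
      · intro h v hv; exact h ⟨v, hv⟩
      · rintro h ⟨v, hv⟩; exact h v hv
    have hQL : Q ⊓ L w ≠ ⊥ := by
      apply hw
      intro v hv htwin
      rw [Submodule.ne_bot_iff]
      refine ⟨u v, Submodule.mem_inf.2 ⟨?_, h1 v hv⟩, ?_⟩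
      · rw [hmemQ]
        intro x hx
        have hadj : G.Adj v x := (htwin x).2 hx
        have hxw : x ≠ w := fun h => by subst h; exact G.irrefl hx
        exact h3 v x hv hxw hadj
      · intro h
        exact h2 v hv (by rw [h]; simp)
    rw [Submodule.ne_bot_iff] at hQL
    obtain ⟨y, hy, hy0⟩ := hQL
    rw [Submodule.mem_inf] at hy
    have hyQ := (hmemQ y).1 hy.1
    refine ⟨Function.update u w y, ?_, ?_, ?_⟩
    · intro v
      by_cases h : v = w
      · subst h; simpa using hy.2
      · rw [Function.update_of_ne h]; exact h1 v h
    · intro v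
      by_cases h : v = w
      · subst h
        simp only [Function.update_self]
        intro hc
        exact hy0 (hF y hc)
      · rw [Function.update_of_ne h]; exact h2 v h
    · intro v v' hadj
      have hvv' : v ≠ v' := G.ne_of_adj hadj
      by_cases h : v = w
      · have hv'w : v' ≠ w := fun hh => hvv' (h.trans hh.symm)
        rw [h, Function.update_self, Function.update_of_ne hv'w]
        exact hyQ v' (h ▸ hadj)
      · by_cases h' : v' = w
        · rw [h', Function.update_self, Function.update_of_ne h]
          rw [h'] at hadj
          have := hyQ v hadj.symm
          rw [← this]
          exact Finset.sum_congr rfl fun t _ => mul_comm _ _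
        · rw [Function.update_of_ne h, Function.update_of_ne h']
          exact h3 v v' h h' hadj
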